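/- For nonnegative integers v_1, v_2 and a nonnegative integer c: binomial(v_2+c-1, c)*binomial(v_1-1, 0) + sum over i from 0 to c of binomial(v_2+(c-i)-1, c-i)*binomial(v_1+i, i+1) equals sum over j from 0 to v_1 of binomial(v_1+v_2-j+c-1, c). -/

import Mathlib

open Finset

lemma hockey (y c : ℕ) : ∑ i ∈ Finset.range (c + 1), (y + i).choose i = (y + c + 1).choose c := by
  induction c with
  | zero => simp
  | succ c ih =>
    rw [Finset.sum_range_succ, ih, show y + (c + 1) + 1 = (y + c + 1) + 1 by ring,
      Nat.choose_succ_succ, show y + (c + 1) = y + c + 1 by ring]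

lemma lemA (x y c : ℕ) :
    ∑ i ∈ Finset.range (c + 1), (x + i).choose i * (y + (c - i)).choose (c - i)
      = (x + y + c + 1).choose c := by
  induction x generalizing c with
  | zero =>
    simp only [Nat.zero_add, Nat.choose_self, one_mul]
    have h := Finset.sum_range_reflect (fun i => (y + i).choose i) (c + 1)
    simp only [Nat.add_sub_cancel] at h
    rw [← hockey y c, ← h]
  | succ x ih =>
    induction c with
    | zero => simp
    | succ c ih2 =>
      rw [Finset.sum_range_succ']
      have h1 : ∀ i ∈ Finset.range (c + 1),
          (x + 1 + (i + 1)).choose (i + 1) * (y + (c + 1 - (i + 1))).choose (c + 1 - (i + 1))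
          = (x + 1 + i).choose i * (y + (c - i)).choose (c - i)
            + (x + 1 + i).choose (i + 1) * (y + (c - i)).choose (c - i) := by
        intro i hi
        rw [show c + 1 - (i + 1) = c - i by omega,
          show x + 1 + (i + 1) = (x + 1 + i) + 1 by ring, Nat.choose_succ_succ, add_mul]
      rw [Finset.sum_congr rfl h1, Finset.sum_add_distrib, ih2]
      have h2 := ih (c + 1)
      rw [Finset.sum_range_succ'] at h2
      have e3 : ∀ i ∈ Finset.range (c + 1),
          (x + (i + 1)).choose (i + 1) * (y + (c + 1 - (i + 1))).choose (c + 1 - (i + 1))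
          = (x + 1 + i).choose (i + 1) * (y + (c - i)).choose (c - i) := by
        intro i hi
        rw [show x + (i + 1) = x + 1 + i by ring, show c + 1 - (i + 1) = c - i by omega]
      rw [Finset.sum_congr rfl e3] at h2
      simp only [Nat.choose_zero_right, one_mul, Nat.sub_zero] at h2 ⊢
      have pas : (x + 1 + y + (c + 1) + 1).choose (c + 1)
          = (x + 1 + y + c + 1).choose c + (x + y + (c + 1) + 1).choose (c + 1) := by
        rw [show x + 1 + y + (c + 1) + 1 = (x + 1 + y + c + 1) + 1 by ring, Nat.choose_succ_succ]
        congr 2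
        ring
      omega

lemma lemB (v₁ v₂ c : ℕ) :
    ∑ i ∈ Finset.range (c + 1), (v₂ + (c - i) - 1).choose (c - i) * (v₁ + i).choose i
      = (v₁ + v₂ + c).choose c := by
  cases v₂ with
  | zero =>
    rw [Finset.sum_range_succ]
    have h : ∀ i ∈ Finset.range c,
        (0 + (c - i) - 1).choose (c - i) * (v₁ + i).choose i = 0 := by
      intro i hi
      rw [Finset.mem_range] at hi
      have : (0 + (c - i) - 1).choose (c - i) = 0 := Nat.choose_eq_zero_of_lt (by omega)
      rw [this, zero_mul]
    rw [Finset.sum_eq_zero h]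
    simp
  | succ w =>
    have h := lemA v₁ w c
    calc ∑ i ∈ Finset.range (c + 1), (w + 1 + (c - i) - 1).choose (c - i) * (v₁ + i).choose i
        = ∑ i ∈ Finset.range (c + 1), (v₁ + i).choose i * (w + (c - i)).choose (c - i) := by
          apply Finset.sum_congr rfl
          intro i hi
          rw [mul_comm]
          congr 2
          omega
      _ = (v₁ + w + c + 1).choose c := h
      _ = (v₁ + (w + 1) + c).choose c := by congr 1; ring

theorem stmt_17 (v₁ v₂ c : ℕ) :
    (v₂ + c - 1).choose c * (v₁ - 1).choose 0 +
        ∑ i ∈ Finset.range (c + 1), (v₂ + (c - i) - 1).choose (c - i) * (v₁ + i).choose (i + 1)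
      = ∑ j ∈ Finset.range (v₁ + 1), (v₁ + v₂ - j + c - 1).choose c := by
  induction v₁ with
  | zero =>
    simp [Nat.choose_succ_self]
  | succ v₁ ih =>
    have hsum : ∀ i ∈ Finset.range (c + 1),
        (v₂ + (c - i) - 1).choose (c - i) * (v₁ + 1 + i).choose (i + 1)
        = (v₂ + (c - i) - 1).choose (c - i) * (v₁ + i).choose i
          + (v₂ + (c - i) - 1).choose (c - i) * (v₁ + i).choose (i + 1) := by
      intro i hi
      rw [show v₁ + 1 + i = (v₁ + i) + 1 by ring, Nat.choose_succ_succ, mul_add]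
    rw [Finset.sum_congr rfl hsum, Finset.sum_add_distrib, lemB]
    have hrhs : ∑ j ∈ Finset.range (v₁ + 1 + 1), (v₁ + 1 + v₂ - j + c - 1).choose c
        = ∑ j ∈ Finset.range (v₁ + 1), (v₁ + v₂ - j + c - 1).choose c
          + (v₁ + v₂ + c).choose c := by
      rw [Finset.sum_range_succ']
      congr 1
      · apply Finset.sum_congr rfl
        intro j hj
        congr 1
        omega
      · congr 1
        omega
    simp only [Nat.choose_zero_right, mul_one] at ih ⊢
    omega
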